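/- Let G be a finite group acting on the right by automorphisms on a finite abelian group (V,+), and let f : G → V be a bijective right 1-cocycle. Then the ℂG-module ℂ^V, equipped with the monomial action χ g = χ(f(g⁻¹)) · (χ.g) on the basis V̂, is isomorphic to the right regular representation of ℂG, an isomorphism being given by f* : ℂ^V → ℂ^G, τ ↦ τ∘f. -/

import Mathlib

/-- If G acts on the right by automorphisms on (V,+) (`act : G → AddAut V`,
`act (g*h) = act h * act g`, `v.g = act g v`) and f : G → V is a bijective right 1-cocycle,
then the ℂG-module ℂ^V with the monomial action χ g = χ(f(g⁻¹))·(χ.g) on the basis V̂ is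
isomorphic to the right regular representation of ℂG, an isomorphism being given by
f* : τ ↦ τ∘f.  This is expressed by: f* is bijective, and f* intertwines the monomial action
on the basis V̂ with right translation (ρ g)(h) = ρ(h g⁻¹):
f*(χ g)(h) = χ(f(g⁻¹))·χ(f(h).g⁻¹) equals (f*(χ) g)(h) = χ(f(h g⁻¹)). -/
theorem stmt_4 {G V : Type} [Group G] [Fintype G] [AddCommGroup V] [Fintype V]
    (act : G → AddAut V) (hone : act 1 = 0)
    (hmul : ∀ g h : G, act (g * h) = act h + act g)
    (f : G → V) (hf : ∀ x g : G, f (x * g) = act g (f x) + f g)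
    (hbij : Function.Bijective f) :
    Function.Bijective (fun τ : V → ℂ => τ ∘ f) ∧
    ∀ (χ : AddChar V ℂˣ) (g h : G),
      χ (f g⁻¹) * χ (act g⁻¹ (f h)) = χ (f (h * g⁻¹)) := by
  constructor
  · constructor
    · intro τ σ h
      funext v
      obtain ⟨x, rfl⟩ := hbij.surjective v
      exact congrFun h x
    · intro ρ
      exact ⟨ρ ∘ (Equiv.ofBijective f hbij).symm, by
        funext g; simp [(Equiv.ofBijective f hbij).symm_apply_apply g]⟩
  · intro χ g h
    rw [hf h g⁻¹, AddChar.map_add_eq_mul, mul_comm]
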